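/- For any real matrices A ∈ ℝ^{m×r} and B ∈ ℝ^{n×r}, | ‖ABᵀ‖_* − ‖A‖_F² | ≤ √(‖AᵀA − BᵀB‖_*) · ‖A‖_*. -/

import Mathlib

open Matrix

/-- Squared Frobenius norm of a real matrix. -/
noncomputable def frobSq {m n : ℕ} (A : Matrix (Fin m) (Fin n) ℝ) : ℝ :=
  ∑ i, ∑ j, (A i j) ^ 2

/-- Frobenius norm. -/
noncomputable def frobNorm {m n : ℕ} (A : Matrix (Fin m) (Fin n) ℝ) : ℝ :=
  Real.sqrt (frobSq A)

lemma wwT_posSemidef {m n : ℕ} (W : Matrix (Fin m) (Fin n) ℝ) :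
    (W * Wᵀ).PosSemidef := by
  simpa [Matrix.conjTranspose_eq_transpose_of_trivial] using
    W.posSemidef_self_mul_conjTranspose

/-- Nuclear norm: trace of the PSD square root of `W * Wᵀ`. -/
noncomputable def nuclearNorm {m n : ℕ} (W : Matrix (Fin m) (Fin n) ℝ) : ℝ :=
  ((wwT_posSemidef W).isHermitian.eigenvectorUnitary.1 *
    diagonal ((√·) ∘ (wwT_posSemidef W).isHermitian.eigenvalues) *
    (star (wwT_posSemidef W).isHermitian.eigenvectorUnitary : Matrix (Fin m) (Fin m) ℝ)).trace

/-- PSD square root via the spectral decomposition. -/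
noncomputable def Matrix.PosSemidef.sqrt {k : ℕ} {M : Matrix (Fin k) (Fin k) ℝ}
    (hM : M.PosSemidef) : Matrix (Fin k) (Fin k) ℝ :=
  hM.isHermitian.eigenvectorUnitary.1 * diagonal ((√·) ∘ hM.isHermitian.eigenvalues) *
    (star hM.isHermitian.eigenvectorUnitary : Matrix (Fin k) (Fin k) ℝ)

section sqrtPort
open scoped MatrixOrder

lemma Matrix.PosSemidef.sqrt_eq_cfcSqrt {k : ℕ} {M : Matrix (Fin k) (Fin k) ℝ}
    (hM : M.PosSemidef) : hM.sqrt = CFC.sqrt M := by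
  rw [CFC.sqrt_eq_cfc, cfc_nnreal_eq_real _ M (nonneg_iff_posSemidef.mpr hM), hM.1.cfc_eq]
  simp only [IsHermitian.cfc, Unitary.conjStarAlgAut_apply, Matrix.PosSemidef.sqrt]
  congr 3
  funext i
  simp [Real.coe_toNNReal', hM.eigenvalues_nonneg i]

lemma Matrix.PosSemidef.posSemidef_sqrt {k : ℕ} {M : Matrix (Fin k) (Fin k) ℝ}
    (hM : M.PosSemidef) : hM.sqrt.PosSemidef := by
  rw [hM.sqrt_eq_cfcSqrt]
  exact nonneg_iff_posSemidef.mp (CFC.sqrt_nonneg M)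

lemma Matrix.PosSemidef.sqrt_mul_self {k : ℕ} {M : Matrix (Fin k) (Fin k) ℝ}
    (hM : M.PosSemidef) : hM.sqrt * hM.sqrt = M := by
  rw [hM.sqrt_eq_cfcSqrt]
  exact CFC.sqrt_mul_sqrt_self M (nonneg_iff_posSemidef.mpr hM)

lemma Matrix.PosSemidef.sq_sqrt {k : ℕ} {M : Matrix (Fin k) (Fin k) ℝ}
    (hM : M.PosSemidef) : hM.sqrt ^ 2 = M := by
  rw [pow_two]; exact hM.sqrt_mul_self

lemma Matrix.PosSemidef.eq_sqrt_of_sq_eq {k : ℕ} {M N : Matrix (Fin k) (Fin k) ℝ}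
    (hM : M.PosSemidef) (hN : N.PosSemidef) (h : M ^ 2 = N) : M = hN.sqrt := by
  rw [hN.sqrt_eq_cfcSqrt, eq_comm,
    CFC.sqrt_eq_iff _ _ (nonneg_iff_posSemidef.mpr hN) (nonneg_iff_posSemidef.mpr hM), ← sq]
  exact h

end sqrtPort

lemma psd_tmul {m n : ℕ} (W : Matrix (Fin m) (Fin n) ℝ) : (Wᵀ * W).PosSemidef := by
  simpa [Matrix.conjTranspose_eq_transpose_of_trivial] using
    W.posSemidef_conjTranspose_mul_self

lemma svd_exists {m n : ℕ} (W : Matrix (Fin m) (Fin n) ℝ) :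
    ∃ (V : Matrix (Fin n) (Fin n) ℝ) (d : Fin n → ℝ),
      Vᵀ * V = 1 ∧ V * Vᵀ = 1 ∧ (∀ i, 0 ≤ d i) ∧
      (W * V)ᵀ * (W * V) = diagonal d ∧
      nuclearNorm W = ∑ i, Real.sqrt (d i) := by
  have hS : (Wᵀ * W).PosSemidef := psd_tmul W
  set V : Matrix (Fin n) (Fin n) ℝ := (hS.1.eigenvectorUnitary : Matrix (Fin n) (Fin n) ℝ)
    with hVdef
  set d : Fin n → ℝ := hS.1.eigenvalues with hddef
  have hd : ∀ i, 0 ≤ d i := hS.eigenvalues_nonneg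
  have hVtV : Vᵀ * V = 1 := by
    have h := mem_unitaryGroup_iff'.mp hS.1.eigenvectorUnitary.2
    simpa [Matrix.star_eq_conjTranspose, Matrix.conjTranspose_eq_transpose_of_trivial] using h
  have hVVt : V * Vᵀ = 1 := by
    have h := mem_unitaryGroup_iff.mp hS.1.eigenvectorUnitary.2
    simpa [Matrix.star_eq_conjTranspose, Matrix.conjTranspose_eq_transpose_of_trivial] using h
  have hdiag : Vᵀ * (Wᵀ * W) * V = diagonal d := by
    have h := hS.1.conjStarAlgAut_star_eigenvectorUnitary
    simp only [Unitary.conjStarAlgAut_apply] at h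
    simpa [Matrix.star_eq_conjTranspose, Matrix.conjTranspose_eq_transpose_of_trivial,
      Function.comp] using h
  set N : Matrix (Fin m) (Fin n) ℝ := W * V with hNdef
  have hNtN : Nᵀ * N = diagonal d := by
    rw [hNdef, transpose_mul, Matrix.mul_assoc, ← Matrix.mul_assoc Wᵀ, ← Matrix.mul_assoc]
    exact hdiag
  refine ⟨V, d, hVtV, hVVt, hd, hNtN, ?_⟩
  set g : Fin n → ℝ := fun i => (Real.sqrt (d i))⁻¹ with hgdef
  have hg : ∀ i, 0 ≤ g i := fun i => inv_nonneg.mpr (Real.sqrt_nonneg _)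
  have hgd : ∀ i, g i * d i = Real.sqrt (d i) := by
    intro i
    rw [hgdef, inv_mul_eq_div, Real.div_sqrt]
  have hcol : ∀ i, d i = 0 → ∀ k, N k i = 0 := by
    intro i hdi k
    have h := congrArg (fun M => M i i) hNtN
    simp only [mul_apply, transpose_apply, diagonal_apply_eq] at h
    rw [hdi] at h
    have hk := (Finset.sum_eq_zero_iff_of_nonneg (fun k _ => mul_self_nonneg (N k i))).mp h
      k (Finset.mem_univ k)
    exact mul_self_eq_zero.mp hk
  have hNe : N * diagonal (g * d * g) = N := by
    ext k i
    rw [mul_diagonal]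
    by_cases h : d i = 0
    · simp [hcol i h k]
    · have h1 : (g * d * g) i = 1 := by
        simp only [Pi.mul_apply]
        rw [hgd i]
        simp only [hgdef]
        exact mul_inv_cancel₀ (Real.sqrt_ne_zero'.mpr ((hd i).lt_of_ne' h))
      rw [h1, mul_one]
  set G : Matrix (Fin n) (Fin n) ℝ := diagonal g with hGdef
  set R : Matrix (Fin m) (Fin m) ℝ := N * G * Nᵀ with hRdef
  have hNNt : N * Nᵀ = W * Wᵀ := by
    rw [hNdef, transpose_mul, Matrix.mul_assoc, ← Matrix.mul_assoc V, hVVt, Matrix.one_mul]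
  have hRpsd : R.PosSemidef := by
    have hsq : (diagonal (fun i => Real.sqrt (g i)) : Matrix (Fin n) (Fin n) ℝ) *
        diagonal (fun i => Real.sqrt (g i)) = G := by
      have h2 : (fun i => Real.sqrt (g i) * Real.sqrt (g i)) = g :=
        funext fun i => Real.mul_self_sqrt (hg i)
      rw [diagonal_mul_diagonal, h2, hGdef]
    have key : (N * diagonal (fun i => Real.sqrt (g i))) *
        (N * diagonal (fun i => Real.sqrt (g i)))ᵀ = R := by
      rw [transpose_mul, diagonal_transpose, Matrix.mul_assoc,
        ← Matrix.mul_assoc (diagonal _), hsq, ← Matrix.mul_assoc, hRdef]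
    rw [← key]
    exact wwT_posSemidef _
  have hRR : R * R = W * Wᵀ := by
    rw [hRdef]
    calc N * G * Nᵀ * (N * G * Nᵀ)
        = N * (G * ((Nᵀ * N) * (G * Nᵀ))) := by simp only [Matrix.mul_assoc]
      _ = N * (diagonal (g * d * g) * Nᵀ) := by
          rw [hNtN, hGdef]
          rw [← Matrix.mul_assoc (diagonal g) (diagonal d)]
          rw [diagonal_mul_diagonal]
          rw [← Matrix.mul_assoc (diagonal _) (diagonal g)]
          rw [diagonal_mul_diagonal]
          rfl
      _ = N * Nᵀ := by rw [← Matrix.mul_assoc, hNe]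
      _ = W * Wᵀ := hNNt
  have hsqrt : R = (wwT_posSemidef W).sqrt :=
    hRpsd.eq_sqrt_of_sq_eq (wwT_posSemidef W) (by rw [pow_two]; exact hRR)
  show (wwT_posSemidef W).sqrt.trace = _
  rw [← hsqrt, hRdef, Matrix.mul_assoc, Matrix.trace_mul_comm, Matrix.mul_assoc, hNtN,
    hGdef, diagonal_mul_diagonal, trace_diagonal]
  exact Finset.sum_congr rfl (fun i _ => hgd i)

section helpers
variable {m n : ℕ}

lemma psd_diag_nonneg {M : Matrix (Fin n) (Fin n) ℝ} (hM : M.PosSemidef) (i : Fin n) :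
    0 ≤ M i i := by
  exact hM.diag_nonneg

lemma psd_trace_nonneg {M : Matrix (Fin n) (Fin n) ℝ} (hM : M.PosSemidef) : 0 ≤ M.trace :=
  Finset.sum_nonneg fun i _ => psd_diag_nonneg hM i

lemma psd_conj {M : Matrix (Fin n) (Fin n) ℝ} (hM : M.PosSemidef)
    (V : Matrix (Fin m) (Fin n) ℝ) : (V * M * Vᵀ).PosSemidef := by
  simpa [Matrix.conjTranspose_eq_transpose_of_trivial] using
    hM.mul_mul_conjTranspose_same V

lemma sum_cs {ι : Type*} [Fintype ι] (a b : ι → ℝ) :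
    ∑ i, a i * b i ≤ Real.sqrt (∑ i, a i ^ 2) * Real.sqrt (∑ i, b i ^ 2) := by
  have h1 : (∑ i, a i * b i) ^ 2 ≤ (∑ i, a i ^ 2) * (∑ i, b i ^ 2) :=
    Finset.sum_mul_sq_le_sq_mul_sq Finset.univ a b
  calc ∑ i, a i * b i ≤ |∑ i, a i * b i| := le_abs_self _
    _ = Real.sqrt ((∑ i, a i * b i) ^ 2) := (Real.sqrt_sq_eq_abs _).symm
    _ ≤ Real.sqrt ((∑ i, a i ^ 2) * (∑ i, b i ^ 2)) := Real.sqrt_le_sqrt h1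
    _ = _ := Real.sqrt_mul (Finset.sum_nonneg fun i _ => sq_nonneg _) _

end helpers

lemma col_sq {m n : ℕ} (M : Matrix (Fin m) (Fin n) ℝ) (i : Fin n) :
    (Mᵀ * M) i i = ∑ k, M k i ^ 2 := by
  simp only [mul_apply, transpose_apply, pow_two]

lemma trace_t_mul {m n : ℕ} (M N : Matrix (Fin m) (Fin n) ℝ) :
    (Mᵀ * N).trace = ∑ i, ∑ k, M k i * N k i := by
  simp only [Matrix.trace, Matrix.diag, mul_apply, transpose_apply]

lemma trace_dual_le {m n : ℕ} (W U : Matrix (Fin m) (Fin n) ℝ)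
    (hU : ((1 : Matrix (Fin n) (Fin n) ℝ) - Uᵀ * U).PosSemidef) :
    (Uᵀ * W).trace ≤ nuclearNorm W := by
  obtain ⟨V, d, hVtV, hVVt, hd, hNtN, hnuc⟩ := svd_exists W
  set N := W * V with hNdef
  have hWNV : W = N * Vᵀ := by rw [hNdef, Matrix.mul_assoc, hVVt, Matrix.mul_one]
  have htr : (Uᵀ * W).trace = ((U * V)ᵀ * N).trace := by
    conv_lhs => rw [hWNV]
    rw [← Matrix.mul_assoc, Matrix.trace_mul_cycle, ← Matrix.mul_assoc, ← transpose_mul,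
      Matrix.mul_assoc]
  have hcolU : ∀ i, ∑ k, (U * V) k i ^ 2 ≤ 1 := by
    intro i
    have hpsd : (Vᵀ * ((1 : Matrix (Fin n) (Fin n) ℝ) - Uᵀ * U) * V).PosSemidef := by
      have := psd_conj hU Vᵀ
      rwa [transpose_transpose] at this
    have heq : Vᵀ * ((1 : Matrix (Fin n) (Fin n) ℝ) - Uᵀ * U) * V =
        1 - (U * V)ᵀ * (U * V) := by
      rw [Matrix.mul_sub, Matrix.sub_mul, Matrix.mul_one, hVtV, transpose_mul]
      congr 1
      rw [Matrix.mul_assoc, Matrix.mul_assoc, Matrix.mul_assoc]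
    rw [heq] at hpsd
    have h1 := psd_diag_nonneg hpsd i
    simp only [Matrix.sub_apply, one_apply_eq, col_sq] at h1
    linarith
  have hcolN : ∀ i, ∑ k, N k i ^ 2 = d i := by
    intro i
    rw [← col_sq]
    have h := congrArg (fun M => M i i) hNtN
    simpa using h
  rw [htr, hnuc]
  rw [trace_t_mul]
  refine Finset.sum_le_sum fun i _ => ?_
  calc ∑ k, (U * V) k i * N k i
      ≤ Real.sqrt (∑ k, (U * V) k i ^ 2) * Real.sqrt (∑ k, N k i ^ 2) := sum_cs _ _
    _ ≤ 1 * Real.sqrt (d i) := by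
        rw [hcolN i]
        gcongr
        exact Real.sqrt_le_one.mpr (hcolU i)
    _ = Real.sqrt (d i) := one_mul _

lemma exists_dual_maximizer {m n : ℕ} (W : Matrix (Fin m) (Fin n) ℝ) :
    ∃ U : Matrix (Fin m) (Fin n) ℝ,
      ((1 : Matrix (Fin n) (Fin n) ℝ) - Uᵀ * U).PosSemidef ∧
      ((1 : Matrix (Fin m) (Fin m) ℝ) - U * Uᵀ).PosSemidef ∧
      (Uᵀ * W).trace = nuclearNorm W := by
  obtain ⟨V, d, hVtV, hVVt, hd, hNtN, hnuc⟩ := svd_exists W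
  set N := W * V with hNdef
  have hWNV : W = N * Vᵀ := by rw [hNdef, Matrix.mul_assoc, hVVt, Matrix.mul_one]
  clear_value N
  set g : Fin n → ℝ := fun i => (Real.sqrt (d i))⁻¹ with hgdef
  have hgd : ∀ i, g i * d i = Real.sqrt (d i) := by
    intro i
    rw [hgdef, inv_mul_eq_div, Real.div_sqrt]
  have hg0 : ∀ i, d i = 0 → g i = 0 := by intro i h; simp [hgdef, h]
  have hgdg : ∀ i, g i * d i * g i = Real.sqrt (d i) * (Real.sqrt (d i))⁻¹ := by
    intro i; rw [hgd i, hgdef]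
  refine ⟨N * diagonal g * Vᵀ, ?_, ?_, ?_⟩
  · -- 1 - UᵀU psd
    have hUt : (N * diagonal g * Vᵀ)ᵀ = V * diagonal g * Nᵀ := by
      rw [transpose_mul, transpose_mul, diagonal_transpose, transpose_transpose,
        Matrix.mul_assoc]
    rw [hUt]
    have hUtU : V * diagonal g * Nᵀ * (N * diagonal g * Vᵀ) =
        V * diagonal (g * d * g) * Vᵀ := by
      calc V * diagonal g * Nᵀ * (N * diagonal g * Vᵀ)
          = V * (diagonal g * ((Nᵀ * N) * (diagonal g * Vᵀ))) := by
            simp only [Matrix.mul_assoc]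
        _ = V * (diagonal (g * d * g) * Vᵀ) := by
            rw [hNtN, ← Matrix.mul_assoc (diagonal g) (diagonal d),
              diagonal_mul_diagonal, ← Matrix.mul_assoc (diagonal _) (diagonal g),
              diagonal_mul_diagonal]
            rfl
        _ = V * diagonal (g * d * g) * Vᵀ := by rw [Matrix.mul_assoc]
    rw [hUtU]
    have key : V * diagonal (fun i => 1 - (g * d * g) i) * Vᵀ =
        1 - V * diagonal (g * d * g) * Vᵀ := by
      have h1 : (diagonal (fun i => 1 - (g * d * g) i) : Matrix (Fin n) (Fin n) ℝ) =
          1 - diagonal (g * d * g) := by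
        rw [← diagonal_one, diagonal_sub]
      rw [h1, Matrix.mul_sub, Matrix.sub_mul, Matrix.mul_one, hVVt]
    rw [← key]
    refine psd_conj (PosSemidef.diagonal ?_) V
    intro i
    have := hgdg i
    simp only [Pi.mul_apply]
    rw [this]
    rcases eq_or_ne (Real.sqrt (d i)) 0 with h | h
    · simp [h]
    · rw [mul_inv_cancel₀ h]; norm_num
  · -- 1 - UUᵀ psd
    have hUt : (N * diagonal g * Vᵀ)ᵀ = V * diagonal g * Nᵀ := by
      rw [transpose_mul, transpose_mul, diagonal_transpose, transpose_transpose,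
        Matrix.mul_assoc]
    rw [hUt]
    have hUUt : N * diagonal g * Vᵀ * (V * diagonal g * Nᵀ) =
        N * diagonal (g * g) * Nᵀ := by
      calc N * diagonal g * Vᵀ * (V * diagonal g * Nᵀ)
          = N * (diagonal g * ((Vᵀ * V) * (diagonal g * Nᵀ))) := by
            simp only [Matrix.mul_assoc]
        _ = N * (diagonal (g * g) * Nᵀ) := by
            rw [hVtV, Matrix.one_mul, ← Matrix.mul_assoc (diagonal g) (diagonal g),
              diagonal_mul_diagonal]
            rfl
        _ = N * diagonal (g * g) * Nᵀ := (Matrix.mul_assoc N (diagonal (g * g)) Nᵀ).symm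
    rw [hUUt]
    set P : Matrix (Fin m) (Fin m) ℝ := N * diagonal (g * g) * Nᵀ with hPdef
    clear_value P
    have hPt : Pᵀ = P := by
      rw [hPdef, transpose_mul, transpose_mul, diagonal_transpose, transpose_transpose,
        Matrix.mul_assoc]
    have hgg : (g * g) * d * (g * g) = g * g := by
      funext i
      simp only [Pi.mul_apply]
      rcases eq_or_ne (d i) 0 with h | h
      · simp [hg0 i h]
      · have hd1 : g i * d i * g i = 1 := by
          rw [hgdg i, mul_inv_cancel₀ (Real.sqrt_ne_zero'.mpr ((hd i).lt_of_ne' h))]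
        calc g i * g i * d i * (g i * g i) = g i * (g i * d i * g i) * g i := by ring
          _ = g i * g i := by rw [hd1]; ring
    have hPP : P * P = P := by
      rw [hPdef]
      calc N * diagonal (g * g) * Nᵀ * (N * diagonal (g * g) * Nᵀ)
          = N * (diagonal (g * g) * ((Nᵀ * N) * (diagonal (g * g) * Nᵀ))) := by
            simp only [Matrix.mul_assoc]
        _ = N * (diagonal ((g * g) * d * (g * g)) * Nᵀ) := by
            rw [hNtN, ← Matrix.mul_assoc (diagonal (g*g)) (diagonal d),
              diagonal_mul_diagonal, ← Matrix.mul_assoc (diagonal _) (diagonal (g*g)),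
              diagonal_mul_diagonal]
            rfl
        _ = N * (diagonal (g * g) * Nᵀ) := by rw [hgg]
        _ = N * diagonal (g * g) * Nᵀ := (Matrix.mul_assoc N (diagonal (g * g)) Nᵀ).symm
    have hkey : (1 - P)ᵀ * (1 - P) = 1 - P := by
      simp only [transpose_sub, transpose_one, hPt, Matrix.sub_mul, Matrix.mul_sub,
        Matrix.one_mul, Matrix.mul_one, hPP]
      abel
    rw [← hkey]
    exact psd_tmul _
  · -- trace
    have hUt : (N * diagonal g * Vᵀ)ᵀ = V * diagonal g * Nᵀ := by
      rw [transpose_mul, transpose_mul, diagonal_transpose, transpose_transpose,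
        Matrix.mul_assoc]
    rw [hUt, hnuc]
    conv_lhs => rw [hWNV]
    calc (V * diagonal g * Nᵀ * (N * Vᵀ)).trace
        = (V * (diagonal g * (Nᵀ * N)) * Vᵀ).trace := by
          simp only [Matrix.mul_assoc]
      _ = ((Vᵀ * V) * (diagonal g * (Nᵀ * N))).trace := by
          rw [Matrix.trace_mul_cycle]
      _ = (diagonal (g * d)).trace := by
          rw [hVtV, Matrix.one_mul, hNtN, diagonal_mul_diagonal]
          rfl
      _ = ∑ i, Real.sqrt (d i) := by
          rw [trace_diagonal]
          exact Finset.sum_congr rfl fun i _ => hgd i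

section frob
variable {m n : ℕ}

lemma herm_t {M : Matrix (Fin n) (Fin n) ℝ} (h : M.IsHermitian) : Mᵀ = M := by
  simpa [Matrix.conjTranspose_eq_transpose_of_trivial] using h.eq

lemma frobSq_eq_trace (A : Matrix (Fin m) (Fin n) ℝ) : frobSq A = (A * Aᵀ).trace := by
  simp [frobSq, Matrix.trace, Matrix.diag, mul_apply, transpose_apply, pow_two]

lemma frobSq_eq_trace' (A : Matrix (Fin m) (Fin n) ℝ) : frobSq A = (Aᵀ * A).trace := by
  rw [frobSq_eq_trace, Matrix.trace_mul_comm]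

lemma frobSq_nonneg (A : Matrix (Fin m) (Fin n) ℝ) : 0 ≤ frobSq A :=
  Finset.sum_nonneg fun i _ => Finset.sum_nonneg fun j _ => sq_nonneg _

lemma frobNorm_nonneg (A : Matrix (Fin m) (Fin n) ℝ) : 0 ≤ frobNorm A := Real.sqrt_nonneg _

lemma trace_mul_psd_nonneg {X Y : Matrix (Fin n) (Fin n) ℝ} (hX : X.PosSemidef)
    (hY : Y.PosSemidef) : 0 ≤ (X * Y).trace := by
  have hs : hX.sqrt ᵀ = hX.sqrt := herm_t hX.posSemidef_sqrt.1
  have h1 : X * Y = hX.sqrt * (hX.sqrt * Y) := by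
    rw [← Matrix.mul_assoc, hX.sqrt_mul_self]
  rw [h1, Matrix.trace_mul_comm, Matrix.mul_assoc]
  have hpsd : (hX.sqrt * Y * hX.sqrt).PosSemidef := by
    have := psd_conj hY hX.sqrt
    rwa [hs] at this
  rw [← Matrix.mul_assoc]
  exact psd_trace_nonneg hpsd

lemma trace_cs (X Y : Matrix (Fin m) (Fin n) ℝ) :
    (Xᵀ * Y).trace ≤ frobNorm X * frobNorm Y := by
  have h := sum_cs (fun p : Fin n × Fin m => X p.2 p.1) (fun p => Y p.2 p.1)
  simp only [Fintype.sum_prod_type] at h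
  rw [trace_t_mul]
  refine h.trans_eq ?_
  rw [frobNorm, frobNorm, frobSq, frobSq]
  congr 1
  · congr 1
    rw [Finset.sum_comm]
  · congr 1
    rw [Finset.sum_comm]

lemma nuclearNorm_congr {n₁ n₂ : ℕ} (W₁ : Matrix (Fin m) (Fin n₁) ℝ)
    (W₂ : Matrix (Fin m) (Fin n₂) ℝ) (h : W₁ * W₁ᵀ = W₂ * W₂ᵀ) :
    nuclearNorm W₁ = nuclearNorm W₂ := by
  show (wwT_posSemidef W₁).sqrt.trace = (wwT_posSemidef W₂).sqrt.trace
  congr 1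
  exact (wwT_posSemidef W₁).posSemidef_sqrt.eq_sqrt_of_sq_eq (wwT_posSemidef W₂)
    (by rw [PosSemidef.sq_sqrt, h])

lemma nuclearNorm_nonneg (W : Matrix (Fin m) (Fin n) ℝ) : 0 ≤ nuclearNorm W :=
  psd_trace_nonneg (wwT_posSemidef W).posSemidef_sqrt

lemma frobNorm_le_nuclearNorm (A : Matrix (Fin m) (Fin n) ℝ) :
    frobNorm A ≤ nuclearNorm A := by
  obtain ⟨V, d, hVtV, hVVt, hd, hNtN, hnuc⟩ := svd_exists A
  have h1 : frobSq A = ∑ i, d i := by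
    rw [frobSq_eq_trace']
    have h2 : (A * V)ᵀ * (A * V) = Vᵀ * (Aᵀ * A) * V := by
      rw [transpose_mul, Matrix.mul_assoc, ← Matrix.mul_assoc Aᵀ, ← Matrix.mul_assoc]
    have h3 : (Vᵀ * (Aᵀ * A) * V).trace = (Aᵀ * A).trace := by
      rw [Matrix.trace_mul_cycle, ← Matrix.mul_assoc, hVVt, Matrix.one_mul]
    have h4 := congrArg Matrix.trace hNtN
    rw [h2, h3] at h4
    rw [h4, trace_diagonal]
  rw [hnuc, frobNorm, h1]
  have h5 : ∑ i, d i = ∑ i, Real.sqrt (d i) ^ 2 := by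
    exact Finset.sum_congr rfl fun i _ => (Real.sq_sqrt (hd i)).symm
  rw [h5]
  calc Real.sqrt (∑ i, Real.sqrt (d i) ^ 2)
      ≤ Real.sqrt ((∑ i, Real.sqrt (d i)) ^ 2) :=
        Real.sqrt_le_sqrt (Finset.sum_sq_le_sq_sum_of_nonneg fun i _ => Real.sqrt_nonneg _)
    _ = ∑ i, Real.sqrt (d i) :=
        Real.sqrt_sq (Finset.sum_nonneg fun i _ => Real.sqrt_nonneg _)

end frob

section sandwich
variable {r : ℕ}

lemma sandwich_mul {V : Matrix (Fin r) (Fin r) ℝ} (hVtV : Vᵀ * V = 1) (a b : Fin r → ℝ) :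
    (V * diagonal a * Vᵀ) * (V * diagonal b * Vᵀ) = V * diagonal (a * b) * Vᵀ := by
  calc (V * diagonal a * Vᵀ) * (V * diagonal b * Vᵀ)
      = V * (diagonal a * ((Vᵀ * V) * (diagonal b * Vᵀ))) := by simp only [Matrix.mul_assoc]
    _ = V * (diagonal (a * b) * Vᵀ) := by
        rw [hVtV, Matrix.one_mul, ← Matrix.mul_assoc (diagonal a) (diagonal b),
          diagonal_mul_diagonal]
        rfl
    _ = V * diagonal (a * b) * Vᵀ := (Matrix.mul_assoc V (diagonal (a * b)) Vᵀ).symm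

lemma sandwich_t (V : Matrix (Fin r) (Fin r) ℝ) (a : Fin r → ℝ) :
    (V * diagonal a * Vᵀ)ᵀ = V * diagonal a * Vᵀ := by
  rw [transpose_mul, transpose_mul, diagonal_transpose, transpose_transpose, Matrix.mul_assoc]

lemma one_sub_sandwich {V : Matrix (Fin r) (Fin r) ℝ} (hVVt : V * Vᵀ = 1) (a : Fin r → ℝ) :
    V * diagonal (fun i => 1 - a i) * Vᵀ = 1 - V * diagonal a * Vᵀ := by
  have h1 : (diagonal (fun i => 1 - a i) : Matrix (Fin r) (Fin r) ℝ) = 1 - diagonal a := by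
    rw [← diagonal_one, diagonal_sub]
  rw [h1, Matrix.mul_sub, Matrix.sub_mul, Matrix.mul_one, hVVt]

lemma trace_sandwich {V : Matrix (Fin r) (Fin r) ℝ} (hVtV : Vᵀ * V = 1) (a : Fin r → ℝ) :
    (V * diagonal a * Vᵀ).trace = ∑ i, a i := by
  rw [Matrix.trace_mul_cycle, hVtV, Matrix.one_mul, trace_diagonal]

lemma trace_diagonal_mul (v : Fin r → ℝ) (M : Matrix (Fin r) (Fin r) ℝ) :
    (diagonal v * M).trace = ∑ i, v i * M i i := by
  simp [Matrix.trace, Matrix.diag, Matrix.diagonal_mul]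

lemma rsign_mul_self (x : ℝ) : Real.sign x * x = |x| := by
  rcases lt_trichotomy x 0 with h | h | h
  · rw [Real.sign_of_neg h, abs_of_neg h]; ring
  · simp [h]
  · rw [Real.sign_of_pos h, abs_of_pos h]; ring

lemma rsign_sq_le_one (x : ℝ) : Real.sign x * Real.sign x ≤ 1 := by
  rcases lt_trichotomy x 0 with h | h | h
  · rw [Real.sign_of_neg h]; norm_num
  · simp [h]
  · rw [Real.sign_of_pos h]; norm_num

lemma powers_stormer {X Y : Matrix (Fin r) (Fin r) ℝ} (hX : X.PosSemidef)
    (hY : Y.PosSemidef) : frobSq (hX.sqrt - hY.sqrt) ≤ nuclearNorm (X - Y) := by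
  set Cm := hX.sqrt with hCdef
  set Pm := hY.sqrt with hPdef
  have hCt : Cmᵀ = Cm := herm_t hX.posSemidef_sqrt.1
  have hPt : Pmᵀ = Pm := herm_t hY.posSemidef_sqrt.1
  have hCC : Cm * Cm = X := hX.sqrt_mul_self
  have hPP : Pm * Pm = Y := hY.sqrt_mul_self
  have hCpsd : Cm.PosSemidef := hX.posSemidef_sqrt
  have hPpsd : Pm.PosSemidef := hY.posSemidef_sqrt
  clear_value Cm Pm
  set Δ : Matrix (Fin r) (Fin r) ℝ := Cm - Pm with hΔdef
  set S : Matrix (Fin r) (Fin r) ℝ := Cm + Pm with hSdef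
  have hΔt : Δᵀ = Δ := by rw [hΔdef, transpose_sub, hCt, hPt]
  have hΔH : Δ.IsHermitian := by
    show Δᴴ = Δ
    rw [Matrix.conjTranspose_eq_transpose_of_trivial, hΔt]
  set V : Matrix (Fin r) (Fin r) ℝ := (hΔH.eigenvectorUnitary : Matrix (Fin r) (Fin r) ℝ)
    with hVdef
  set lam : Fin r → ℝ := hΔH.eigenvalues with hlamdef
  have hVtV : Vᵀ * V = 1 := by
    have h := mem_unitaryGroup_iff'.mp hΔH.eigenvectorUnitary.2
    simpa [Matrix.star_eq_conjTranspose, Matrix.conjTranspose_eq_transpose_of_trivial] using h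
  have hVVt : V * Vᵀ = 1 := by
    have h := mem_unitaryGroup_iff.mp hΔH.eigenvectorUnitary.2
    simpa [Matrix.star_eq_conjTranspose, Matrix.conjTranspose_eq_transpose_of_trivial] using h
  have hdiag : Vᵀ * Δ * V = diagonal lam := by
    have h := hΔH.conjStarAlgAut_star_eigenvectorUnitary
    simp only [Unitary.conjStarAlgAut_apply] at h
    simpa [Matrix.star_eq_conjTranspose, Matrix.conjTranspose_eq_transpose_of_trivial,
      Function.comp] using h
  have hspec : Δ = V * diagonal lam * Vᵀ := by
    have h := hΔH.spectral_theorem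
    simp only [Unitary.conjStarAlgAut_apply] at h
    simpa [Matrix.star_eq_conjTranspose, Matrix.conjTranspose_eq_transpose_of_trivial,
      Function.comp] using h
  clear_value V lam
  set s : Fin r → ℝ := fun i => Real.sign (lam i) with hsdef
  set T : Matrix (Fin r) (Fin r) ℝ := V * diagonal s * Vᵀ with hTdef
  set J : Matrix (Fin r) (Fin r) ℝ := V * diagonal (fun i => |lam i|) * Vᵀ with hJdef
  have hTt : Tᵀ = T := sandwich_t V s
  have hTpsd : ((1 : Matrix (Fin r) (Fin r) ℝ) - Tᵀ * T).PosSemidef := by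
    rw [hTt, hTdef, sandwich_mul hVtV, ← one_sub_sandwich hVVt]
    have hnn : (0 : Fin r → ℝ) ≤ fun i => 1 - (s * s) i := by
      intro i
      have h1 := rsign_sq_le_one (lam i)
      simp only [Pi.zero_apply, Pi.mul_apply, hsdef]
      linarith
    exact psd_conj (PosSemidef.diagonal hnn) V
  have hTΔ : T * Δ = J := by
    rw [hTdef, hJdef]
    conv_lhs => rw [hspec]
    rw [sandwich_mul hVtV]
    have h : s * lam = fun i => |lam i| := funext fun i => rsign_mul_self (lam i)
    rw [h]
  have hΔT : Δ * T = J := by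
    rw [hTdef, hJdef]
    conv_lhs => rw [hspec]
    rw [sandwich_mul hVtV]
    have h : lam * s = fun i => |lam i| := funext fun i => by
      show lam i * Real.sign (lam i) = |lam i|
      rw [mul_comm]
      exact rsign_mul_self (lam i)
    rw [h]
  have h2smul : Δ * S + S * Δ = (2 : ℝ) • (X - Y) := by
    rw [hΔdef, hSdef]
    simp only [Matrix.sub_mul, Matrix.add_mul, Matrix.mul_add, Matrix.mul_sub]
    rw [hCC, hPP, two_smul]
    abel
  have htr1 : (T * (X - Y)).trace = (J * S).trace := by
    have e2 : T * (Δ * S) + T * (S * Δ) = (2 : ℝ) • (T * (X - Y)) := by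
      rw [← Matrix.mul_add, h2smul, Matrix.mul_smul]
    have e3 := congrArg Matrix.trace e2
    rw [Matrix.trace_add, Matrix.trace_smul] at e3
    have e4 : (T * (Δ * S)).trace = (J * S).trace := by rw [← Matrix.mul_assoc, hTΔ]
    have e5 : (T * (S * Δ)).trace = (J * S).trace := by
      rw [← Matrix.mul_assoc, Matrix.trace_mul_comm, ← Matrix.mul_assoc, hΔT]
    rw [e4, e5, smul_eq_mul] at e3
    linarith
  have htrJS : (J * S).trace = ∑ i, |lam i| * (Vᵀ * S * V) i i := by
    rw [hJdef, Matrix.mul_assoc (V * diagonal fun i => |lam i|) Vᵀ S, Matrix.trace_mul_comm,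
      ← Matrix.mul_assoc, Matrix.trace_mul_comm, trace_diagonal_mul]
  have hbound : ∀ i, |lam i| ≤ (Vᵀ * S * V) i i := by
    intro i
    have hps1 : (Vᵀ * S * V - diagonal lam).PosSemidef := by
      have hPm2 : S - Δ = Pm + Pm := by rw [hSdef, hΔdef]; abel
      have hp := psd_conj (hPpsd.add hPpsd) Vᵀ
      rw [transpose_transpose, ← hPm2] at hp
      have heq : Vᵀ * (S - Δ) * V = Vᵀ * S * V - diagonal lam := by
        rw [Matrix.mul_sub, Matrix.sub_mul, hdiag]
      rwa [heq] at hp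
    have hps2 : (Vᵀ * S * V + diagonal lam).PosSemidef := by
      have hCm2 : S + Δ = Cm + Cm := by rw [hSdef, hΔdef]; abel
      have hp := psd_conj (hCpsd.add hCpsd) Vᵀ
      rw [transpose_transpose, ← hCm2] at hp
      have heq : Vᵀ * (S + Δ) * V = Vᵀ * S * V + diagonal lam := by
        rw [Matrix.mul_add, Matrix.add_mul, hdiag]
      rwa [heq] at hp
    have h1 := psd_diag_nonneg hps1 i
    have h2 := psd_diag_nonneg hps2 i
    simp only [Matrix.sub_apply, Matrix.add_apply, diagonal_apply_eq] at h1 h2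
    rw [abs_le]
    constructor <;> linarith
  have hfrob : frobSq Δ = ∑ i, lam i ^ 2 := by
    rw [frobSq_eq_trace', hΔt]
    conv_lhs => rw [hspec]
    rw [sandwich_mul hVtV, trace_sandwich hVtV]
    exact Finset.sum_congr rfl fun i _ => (pow_two (lam i)).symm
  have hfinal : frobSq Δ ≤ (T * (X - Y)).trace := by
    rw [htr1, htrJS, hfrob]
    refine Finset.sum_le_sum fun i _ => ?_
    calc lam i ^ 2 = |lam i| * |lam i| := by rw [pow_two, ← abs_mul_abs_self]
      _ ≤ |lam i| * (Vᵀ * S * V) i i := mul_le_mul_of_nonneg_left (hbound i) (abs_nonneg _)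
  have hdual := trace_dual_le (X - Y) T hTpsd
  rw [hTt] at hdual
  exact hfinal.trans hdual

end sandwich

section final
variable {m n r : ℕ}

lemma frob_contract (A U : Matrix (Fin m) (Fin r) ℝ)
    (hU : ((1 : Matrix (Fin m) (Fin m) ℝ) - U * Uᵀ).PosSemidef) :
    frobSq (Aᵀ * U) ≤ frobSq A := by
  rw [frobSq_eq_trace' (Aᵀ * U), frobSq_eq_trace A]
  have h1 : ((Aᵀ * U)ᵀ * (Aᵀ * U)).trace = (A * Aᵀ * (U * Uᵀ)).trace := by
    calc ((Aᵀ * U)ᵀ * (Aᵀ * U)).trace = (Uᵀ * (A * (Aᵀ * U))).trace := by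
          rw [transpose_mul, transpose_transpose, Matrix.mul_assoc]
      _ = ((A * (Aᵀ * U)) * Uᵀ).trace := Matrix.trace_mul_comm _ _
      _ = (A * Aᵀ * (U * Uᵀ)).trace := by simp only [Matrix.mul_assoc]
  rw [h1]
  have h2 := trace_mul_psd_nonneg (wwT_posSemidef A) hU
  rw [Matrix.mul_sub, Matrix.mul_one, Matrix.trace_sub] at h2
  linarith

lemma nuclear_diff_le (A : Matrix (Fin m) (Fin r) ℝ) (C P : Matrix (Fin r) (Fin r) ℝ) :
    nuclearNorm (A * C) - nuclearNorm (A * P) ≤ frobNorm A * frobNorm (C - P) := by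
  obtain ⟨U, hU1, hU2, hU3⟩ := exists_dual_maximizer (A * C)
  have hle := trace_dual_le (A * P) U hU1
  have hdiff : (Aᵀ * U)ᵀ * (C - P) = Uᵀ * (A * C) - Uᵀ * (A * P) := by
    rw [transpose_mul, transpose_transpose, Matrix.mul_sub, ← Matrix.mul_assoc,
      ← Matrix.mul_assoc]
  have hcontract : frobNorm (Aᵀ * U) ≤ frobNorm A :=
    Real.sqrt_le_sqrt (frob_contract A U hU2)
  calc nuclearNorm (A * C) - nuclearNorm (A * P)
      ≤ (Uᵀ * (A * C)).trace - (Uᵀ * (A * P)).trace := by rw [hU3]; linarith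
    _ = ((Aᵀ * U)ᵀ * (C - P)).trace := by rw [hdiff, Matrix.trace_sub]
    _ ≤ frobNorm (Aᵀ * U) * frobNorm (C - P) := trace_cs _ _
    _ ≤ frobNorm A * frobNorm (C - P) :=
        mul_le_mul_of_nonneg_right hcontract (frobNorm_nonneg _)

lemma frobNorm_sub_symm (C P : Matrix (Fin r) (Fin r) ℝ) :
    frobNorm (P - C) = frobNorm (C - P) := by
  unfold frobNorm frobSq
  congr 1
  refine Finset.sum_congr rfl fun i _ => Finset.sum_congr rfl fun j _ => ?_
  rw [Matrix.sub_apply, Matrix.sub_apply, ← neg_sub (C i j) (P i j), neg_sq]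

lemma nuclear_diff_bound (A : Matrix (Fin m) (Fin r) ℝ) (C P : Matrix (Fin r) (Fin r) ℝ) :
    |nuclearNorm (A * C) - nuclearNorm (A * P)| ≤ frobNorm A * frobNorm (C - P) := by
  rw [abs_sub_le_iff]
  refine ⟨nuclear_diff_le A C P, ?_⟩
  have h := nuclear_diff_le A P C
  rwa [frobNorm_sub_symm] at h

/-- `| ‖ABᵀ‖_* − ‖A‖_F² | ≤ √(‖AᵀA − BᵀB‖_*) · ‖A‖_*`. -/
theorem nuclearNorm_gap_bound {m n r : ℕ}
    (A : Matrix (Fin m) (Fin r) ℝ) (B : Matrix (Fin n) (Fin r) ℝ) :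
    |nuclearNorm (A * Bᵀ) - frobSq A| ≤
      Real.sqrt (nuclearNorm (Aᵀ * A - Bᵀ * B)) * nuclearNorm A := by
  have hAt : (Aᵀ * A).PosSemidef := psd_tmul A
  have hBt : (Bᵀ * B).PosSemidef := psd_tmul B
  set P := hAt.sqrt with hPdef
  set C := hBt.sqrt with hCdef
  have hPt : Pᵀ = P := herm_t hAt.posSemidef_sqrt.1
  have hCt : Cᵀ = C := herm_t hBt.posSemidef_sqrt.1
  have hPP : P * P = Aᵀ * A := hAt.sqrt_mul_self
  have hCC : C * C = Bᵀ * B := hBt.sqrt_mul_self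
  have h1 : nuclearNorm (A * Bᵀ) = nuclearNorm (A * C) := by
    apply nuclearNorm_congr
    rw [transpose_mul, transpose_mul, transpose_transpose, hCt]
    calc A * Bᵀ * (B * Aᵀ) = A * ((Bᵀ * B) * Aᵀ) := by simp only [Matrix.mul_assoc]
      _ = A * ((C * C) * Aᵀ) := by rw [hCC]
      _ = A * C * (C * Aᵀ) := by simp only [Matrix.mul_assoc]
  have h2 : frobSq A = nuclearNorm (A * P) := by
    have hsq : (A * Aᵀ) ^ 2 = (A * P) * (A * P)ᵀ := by
      rw [transpose_mul, hPt, pow_two]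
      calc A * Aᵀ * (A * Aᵀ) = A * ((Aᵀ * A) * Aᵀ) := by simp only [Matrix.mul_assoc]
        _ = A * ((P * P) * Aᵀ) := by rw [hPP]
        _ = A * P * (P * Aᵀ) := by simp only [Matrix.mul_assoc]
    have heq : (A * Aᵀ) = (wwT_posSemidef (A * P)).sqrt :=
      (wwT_posSemidef A).eq_sqrt_of_sq_eq (wwT_posSemidef (A * P)) hsq
    rw [frobSq_eq_trace]
    show (A * Aᵀ).trace = (wwT_posSemidef (A * P)).sqrt.trace
    rw [← heq]
  rw [h1, h2]
  have h3 := nuclear_diff_bound A C P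
  have h4 : frobSq (C - P) ≤ nuclearNorm (Aᵀ * A - Bᵀ * B) := by
    have hps := powers_stormer hBt hAt
    have hneg : nuclearNorm (Bᵀ * B - Aᵀ * A) = nuclearNorm (Aᵀ * A - Bᵀ * B) := by
      apply nuclearNorm_congr
      have hms : (Bᵀ * B - Aᵀ * A) = -(Aᵀ * A - Bᵀ * B) := (neg_sub _ _).symm
      rw [hms, transpose_neg, Matrix.neg_mul, Matrix.mul_neg, neg_neg]
    rw [hneg] at hps
    exact hps
  have h5 : frobNorm (C - P) ≤ Real.sqrt (nuclearNorm (Aᵀ * A - Bᵀ * B)) :=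
    Real.sqrt_le_sqrt h4
  have h6 : frobNorm A ≤ nuclearNorm A := frobNorm_le_nuclearNorm A
  calc |nuclearNorm (A * C) - nuclearNorm (A * P)| ≤ frobNorm A * frobNorm (C - P) := h3
    _ ≤ nuclearNorm A * Real.sqrt (nuclearNorm (Aᵀ * A - Bᵀ * B)) :=
        mul_le_mul h6 h5 (frobNorm_nonneg _) (nuclearNorm_nonneg A)
    _ = Real.sqrt (nuclearNorm (Aᵀ * A - Bᵀ * B)) * nuclearNorm A := mul_comm _ _

end final
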